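/- Let B be a standard one-dimensional Brownian motion. For all real numbers c > 1, M > 1 and a > 0, P( sup_{1 ≤ t ≤ M} |B_t|/√t ≥ a ) ≤ 4·( (log M)/(log c) + 1 )·(c/a)·exp( −(1/2)·(a/c)² ). -/

import Mathlib

open MeasureTheory ProbabilityTheory Set

noncomputable section

/-- `B` is a standard one-dimensional Brownian motion started at `0` under the
probability measure `P` (only its behavior at nonnegative times is constrained):
it starts at `0`, has continuous paths, and has independent increments with
`B t - B s` Gaussian of mean `0` and variance `t - s` for `0 ≤ s ≤ t`. -/
structure IsBrownianMotion {Ω : Type*} [MeasurableSpace Ω] (P : Measure Ω)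
    (B : ℝ → Ω → ℝ) : Prop where
  isProb : IsProbabilityMeasure P
  init : ∀ ω, B 0 ω = 0
  cont : ∀ ω, Continuous fun t => B t ω
  meas : ∀ t, Measurable (B t)
  gauss : ∀ s t : ℝ, 0 ≤ s → s ≤ t →
    Measure.map (fun ω => B t ω - B s ω) P = gaussianReal 0 (t - s).toNNReal
  indep : ∀ (n : ℕ) (ts : Fin (n + 1) → ℝ), (∀ i, 0 ≤ ts i) → Monotone ts →
    iIndepFun (m := fun _ => (inferInstance : MeasurableSpace ℝ))
      (fun (i : Fin n) (ω : Ω) => B (ts i.succ) ω - B (ts i.castSucc) ω) P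

/-- The restriction of a process to nonnegative times, as a path-valued map. -/
def nnPath {Ω : Type*} (W : ℝ → Ω → ℝ) (ω : Ω) : {t : ℝ // 0 ≤ t} → ℝ :=
  fun t => W t.1 ω

/-- `W` is a two-sided standard Brownian motion under `P`: `(W t)_{t ≥ 0}` and
`(W (-t))_{t ≥ 0}` are independent standard Brownian motions started at `0`. -/
structure IsTwoSidedBM {Ω : Type*} [MeasurableSpace Ω] (P : Measure Ω)
    (W : ℝ → Ω → ℝ) : Prop where
  pos : IsBrownianMotion P fun t ω => W t ω
  neg : IsBrownianMotion P fun t ω => W (-t) ω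
  indep : IndepFun (nnPath W) (nnPath fun t ω => W (-t) ω) P

/-- `f` admits an `x`-minimum at `y₀`. -/
def xMinimumAt (f : ℝ → ℝ) (x y₀ : ℝ) : Prop :=
  ∃ a b : ℝ, a < y₀ ∧ y₀ < b ∧ (∀ y ∈ Icc a b, f y₀ ≤ f y) ∧
    f y₀ + x ≤ f a ∧ f y₀ + x ≤ f b

/-- `f` admits an `x`-maximum at `y₀`. -/
def xMaximumAt (f : ℝ → ℝ) (x y₀ : ℝ) : Prop :=
  xMinimumAt (fun t => -f t) x y₀

/-- `y₀` is an `x`-extremum of `f`. -/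
def xExtremumAt (f : ℝ → ℝ) (x y₀ : ℝ) : Prop :=
  xMinimumAt f x y₀ ∨ xMaximumAt f x y₀

/-- `x₁(f, x)`: the smallest positive `x`-extremum of `f`. -/
def xOnePt (f : ℝ → ℝ) (x : ℝ) : ℝ :=
  sInf {y : ℝ | 0 < y ∧ xExtremumAt f x y}

/-- `x₀(f, x)`: the largest nonpositive `x`-extremum of `f`. -/
def xZeroPt (f : ℝ → ℝ) (x : ℝ) : ℝ :=
  sSup {y : ℝ | y ≤ 0 ∧ xExtremumAt f x y}

attribute [local instance] Classical.propDecidable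

/-- `b_x(f)`: that one of `x₀(f,x)`, `x₁(f,x)` which is an `x`-minimum of `f`. -/
def bProc (f : ℝ → ℝ) (x : ℝ) : ℝ :=
  if xMinimumAt f x (xOnePt f x) then xOnePt f x else xZeroPt f x

/-- `g` jumps at `x`: `g` is not locally constant at `x`. -/
def jumpsAt (g : ℝ → ℝ) (x : ℝ) : Prop :=
  ¬ ∃ ε > 0, ∀ y ∈ Ioo (x - ε) (x + ε), g y = g x

/-- `W^#(x, y)`: the maximal ascent of `f` encountered travelling from `x` to `y`. -/
def sharp (f : ℝ → ℝ) (x y : ℝ) : ℝ :=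
  if x ≤ y then sSup {d : ℝ | ∃ u v : ℝ, x ≤ u ∧ u ≤ v ∧ v ≤ y ∧ d = f v - f u}
  else sSup {d : ℝ | ∃ u v : ℝ, y ≤ v ∧ v ≤ u ∧ u ≤ x ∧ d = f v - f u}

/-- The running infimum `inf_{0 ≤ u ≤ t} W u ω`. -/
def runInf {Ω : Type*} (W : ℝ → Ω → ℝ) (ω : Ω) (t : ℝ) : ℝ :=
  sInf ((fun u => W u ω) '' Icc 0 t)

/-- The running supremum `sup_{0 ≤ u ≤ t} W u ω`. -/
def runSup {Ω : Type*} (W : ℝ → Ω → ℝ) (ω : Ω) (t : ℝ) : ℝ :=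
  sSup ((fun u => W u ω) '' Icc 0 t)

/-- `τ_r⁺`: the first time the process rises `r` above its running minimum. -/
def tauPlus {Ω : Type*} (W : ℝ → Ω → ℝ) (r : ℝ) (ω : Ω) : ℝ :=
  sInf {s : ℝ | 0 ≤ s ∧ W s ω - runInf W ω s = r}

/-- `β_r⁺`: the first time the process attains the minimum value it reaches
before time `τ_r⁺`. -/
def betaPlus {Ω : Type*} (W : ℝ → Ω → ℝ) (r : ℝ) (ω : Ω) : ℝ :=
  sInf {s : ℝ | 0 ≤ s ∧ W s ω = runInf W ω (tauPlus W r ω)}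

section AuxLIL

open Real Filter
open scoped NNReal ENNReal

lemma aux_integral {b : ℝ} (y : ℝ) (hb : 0 < b) :
    ∫ t in Set.Ioi y, t * Real.exp (-b * t^2) = (2*b)⁻¹ * Real.exp (-b * y^2) := by
  have hint : IntegrableOn (fun t => t * Real.exp (-b * t^2)) (Set.Ioi y) := by
    have := integrable_rpow_mul_exp_neg_mul_sq hb (s := 1) (by norm_num)
    simpa [Real.rpow_one] using this.integrableOn
  have hderiv : ∀ x ∈ Set.Ici y,
      HasDerivAt (fun t => -(2*b)⁻¹ * Real.exp (-b * t^2)) (x * Real.exp (-b * x^2)) x := by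
    intro x _
    have h1 : HasDerivAt (fun t : ℝ => -b * t^2) (-b * (2*x)) x := by
      simpa using ((hasDerivAt_pow 2 x).const_mul (-b))
    have h2 := (h1.exp).const_mul (-(2*b)⁻¹)
    have hb0 : b ≠ 0 := hb.ne'
    rw [show x * Real.exp (-b * x^2) = -(2*b)⁻¹ * (Real.exp (-b * x^2) * (-b * (2*x))) by field_simp]
    exact h2
  have htend : Tendsto (fun t => -(2*b)⁻¹ * Real.exp (-b * t^2)) atTop (nhds 0) := by
    have : Tendsto (fun t : ℝ => -b * t^2) atTop atBot := by
      apply Tendsto.const_mul_atTop_of_neg (by linarith)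
      exact tendsto_pow_atTop (by norm_num)
    simpa using (Real.tendsto_exp_atBot.comp this).const_mul (-(2*b)⁻¹)
  have := integral_Ioi_of_hasDerivAt_of_tendsto' hderiv hint htend
  rw [this]
  ring

lemma gaussian_tail {v : ℝ≥0} (hv : v ≠ 0) {y : ℝ} (hy : 0 < y) :
    gaussianReal 0 v (Set.Ici y) ≤
      ENNReal.ofReal (Real.sqrt v / y * Real.exp (-y^2 / (2*v))) := by
  have hv' : (0:ℝ) < v := by exact_mod_cast pos_iff_ne_zero.mpr hv
  rw [gaussianReal_apply_eq_integral 0 hv]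
  apply ENNReal.ofReal_le_ofReal
  have hb : (0:ℝ) < (2*(v:ℝ))⁻¹ := by positivity
  have hpdf : ∀ x : ℝ, gaussianPDFReal 0 v x
      = (√(2 * π * v))⁻¹ * Real.exp (-(2*(v:ℝ))⁻¹ * x^2) := by
    intro x
    rw [gaussianPDFReal]
    congr 1
    rw [sub_zero]
    congr 1
    field_simp
  have hint2 : IntegrableOn (fun x => x * Real.exp (-(2*(v:ℝ))⁻¹ * x^2)) (Set.Ioi y) := by
    have := integrable_rpow_mul_exp_neg_mul_sq hb (s := 1) (by norm_num)
    simpa [Real.rpow_one] using this.integrableOn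
  have key : ∫ x in Set.Ici y, gaussianPDFReal 0 v x
      ≤ (√(2 * π * v))⁻¹ / y * ∫ x in Set.Ioi y, x * Real.exp (-(2*(v:ℝ))⁻¹ * x^2) := by
    rw [MeasureTheory.integral_Ici_eq_integral_Ioi]
    rw [← integral_const_mul]
    apply setIntegral_mono_on
    · exact (integrable_gaussianPDFReal 0 v).integrableOn
    · exact (hint2.const_mul _)
    · exact measurableSet_Ioi
    · intro x hx
      rw [hpdf]
      have hx' : y < x := hx
      have h1 : (1:ℝ) ≤ x / y := (one_le_div hy).2 hx'.le
      have hpos : 0 ≤ (√(2 * π * v))⁻¹ * Real.exp (-(2*(v:ℝ))⁻¹ * x^2) := by positivity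
      calc (√(2 * π * v))⁻¹ * Real.exp (-(2*(v:ℝ))⁻¹ * x^2)
          ≤ (x/y) * ((√(2 * π * v))⁻¹ * Real.exp (-(2*(v:ℝ))⁻¹ * x^2)) := by
            nlinarith [hpos]
        _ = (√(2 * π * v))⁻¹ / y * (x * Real.exp (-(2*(v:ℝ))⁻¹ * x^2)) := by ring
  refine key.trans ?_
  rw [aux_integral y hb]
  have h2b : (2 * (2*(v:ℝ))⁻¹)⁻¹ = v := by field_simp
  rw [h2b]
  have hexp : Real.exp (-(2*(v:ℝ))⁻¹ * y^2) = Real.exp (-y^2/(2*v)) := by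
    congr 1; field_simp
  rw [hexp]
  have h4 : √(v:ℝ) ≤ √(2 * π * v) := Real.sqrt_le_sqrt (by nlinarith [Real.pi_gt_three])
  have h3 : (√(2 * π * (v:ℝ)))⁻¹ * v ≤ √(v:ℝ) := by
    have h5 : (√(2 * π * (v:ℝ)))⁻¹ ≤ (√(v:ℝ))⁻¹ :=
      inv_anti₀ (Real.sqrt_pos.2 hv') h4
    calc (√(2 * π * (v:ℝ)))⁻¹ * v ≤ (√(v:ℝ))⁻¹ * v := by
          apply mul_le_mul_of_nonneg_right h5 hv'.le
      _ = √(v:ℝ) := by rw [inv_mul_eq_div, Real.div_sqrt]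
  calc (√(2 * π * (v:ℝ)))⁻¹ / y * ((v:ℝ) * Real.exp (-y^2/(2*v)))
      = ((√(2 * π * (v:ℝ)))⁻¹ * v) * Real.exp (-y^2/(2*v)) / y := by ring
    _ ≤ √(v:ℝ) * Real.exp (-y^2/(2*v)) / y := by gcongr
    _ = √(v:ℝ) / y * Real.exp (-y^2/(2*v)) := by ring

lemma gaussian_half (v : ℝ≥0) : (2:ℝ≥0∞)⁻¹ ≤ gaussianReal 0 v (Set.Ici 0) := by
  by_cases hv : v = 0
  · subst hv
    rw [gaussianReal_zero_var, Measure.dirac_apply_of_mem (by simp : (0:ℝ) ∈ Set.Ici 0)]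
    exact ENNReal.inv_le_one.2 one_le_two
  · have hsymm : gaussianReal 0 v (Set.Iic 0) = gaussianReal 0 v (Set.Ici 0) := by
      have hmap := gaussianReal_map_const_mul (μ := 0) (v := v) (-1)
      norm_num at hmap
      have := congrArg (fun μ : Measure ℝ => μ (Set.Ici 0)) hmap
      rw [Measure.map_apply measurable_neg measurableSet_Ici] at this
      have hpre : (fun x : ℝ => -x) ⁻¹' (Set.Ici 0) = Set.Iic 0 := by
        ext x; simp
      rw [hpre] at this
      exact this
    have huniv : (1:ℝ≥0∞) ≤ gaussianReal 0 v (Set.Iic 0) + gaussianReal 0 v (Set.Ici 0) := by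
      have : (Set.Iic (0:ℝ)) ∪ (Set.Ici 0) = Set.univ := Set.Iic_union_Ici
      calc (1:ℝ≥0∞) = gaussianReal 0 v Set.univ := (measure_univ).symm
        _ ≤ _ := by rw [← this]; exact measure_union_le _ _
    rw [hsymm] at huniv
    have h2 : (1:ℝ≥0∞) ≤ 2 * gaussianReal 0 v (Set.Ici 0) := by
      rw [two_mul]; exact huniv
    calc (2:ℝ≥0∞)⁻¹ = 2⁻¹ * 1 := by rw [mul_one]
      _ ≤ 2⁻¹ * (2 * gaussianReal 0 v (Set.Ici 0)) := by
          exact mul_le_mul_right h2 _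
      _ = gaussianReal 0 v (Set.Ici 0) := by
          rw [← mul_assoc, ENNReal.inv_mul_cancel two_ne_zero ENNReal.ofNat_ne_top, one_mul]

section Levy
variable {Ω : Type*} [MeasurableSpace Ω] {P : Measure Ω} {B : ℝ → Ω → ℝ}

lemma levy_max (hB : IsBrownianMotion P B) (n : ℕ) (t : Fin (n+1) → ℝ)
    (ht0 : ∀ i, 0 ≤ t i) (hmono : Monotone t) {T : ℝ} (hT : ∀ i, t i ≤ T) (x : ℝ) :
    P {ω | ∃ i, x ≤ B (t i) ω} ≤ 2 * P {ω | x ≤ B T ω} := by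
  classical
  haveI := hB.isProb
  have hT0 : (0:ℝ) ≤ T := le_trans (ht0 0) (hT 0)
  -- extended time sequence
  set s : Fin (n+3) → ℝ :=
    fun i => if (i:ℕ) = 0 then 0 else if h2 : (i:ℕ) ≤ n+1 then t ⟨(i:ℕ)-1, by omega⟩ else T
    with hs
  have hsz : ∀ (h : 0 < n+3), s ⟨0, h⟩ = 0 := by intro h; simp [hs]
  have hst : ∀ (j : ℕ) (hj : j < n+1) (h : j+1 < n+3), s ⟨j+1, h⟩ = t ⟨j, hj⟩ := by
    intro j hj h
    simp only [hs]
    rw [if_neg (by omega), dif_pos (by omega)]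
    rfl
  have hsT : ∀ (h : n+2 < n+3), s ⟨n+2, h⟩ = T := by
    intro h
    simp only [hs]
    rw [if_neg (by omega), dif_neg (by omega)]
  have hs0 : ∀ i, 0 ≤ s i := by
    intro i
    simp only [hs]
    split_ifs with h1 h2
    · exact le_refl 0
    · exact ht0 _
    · exact hT0
  have hsmono : Monotone s := by
    intro i j hij
    have hij' : (i:ℕ) ≤ (j:ℕ) := hij
    simp only [hs]
    split_ifs with h1 h2 h3 h4 h5 h6 h7 h8
    all_goals first
      | exact le_refl _
      | exact ht0 _
      | exact hT0
      | omega
      | (exact hmono (show (⟨(i:ℕ)-1, by omega⟩ : Fin (n+1)) ≤ ⟨(j:ℕ)-1, by omega⟩ by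
          simp [Fin.mk_le_mk]; omega))
      | exact hT _
  -- increments
  set D : Fin (n+2) → Ω → ℝ := fun i ω => B (s i.succ) ω - B (s i.castSucc) ω with hD
  have hindep := hB.indep (n+2) s hs0 hsmono
  have hDmeas : ∀ i, Measurable (D i) := fun i => (hB.meas _).sub (hB.meas _)
  -- partial sums
  have hpsum : ∀ (ω : Ω) (m : ℕ) (hm : m < n+3),
      (∑ i ∈ Finset.range m, (if h : i < n+2 then D ⟨i,h⟩ ω else 0)) = B (s ⟨m, hm⟩) ω := by
    intro ω m
    induction m with
    | zero =>
      intro hm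
      rw [hsz hm]
      simp [hB.init ω]
    | succ m ih =>
      intro hm
      rw [Finset.sum_range_succ, ih (by omega), dif_pos (by omega)]
      have h1 : ((⟨m, by omega⟩ : Fin (n+2)).succ : Fin (n+3)) = ⟨m+1, hm⟩ := rfl
      have h2 : ((⟨m, by omega⟩ : Fin (n+2)).castSucc : Fin (n+3)) = ⟨m, by omega⟩ := rfl
      simp only [hD, h1, h2]
      ring
  -- sums over lower filters
  have hSsum : ∀ (ω : Ω) (m : ℕ) (hm : m < n+2),
      (∑ i ∈ Finset.univ.filter (fun i : Fin (n+2) => (i:ℕ) ≤ m), D i ω)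
        = B (s ⟨m+1, by omega⟩) ω := by
    intro ω m hm
    rw [Finset.sum_filter]
    have e1 : ∀ i : Fin (n+2),
        (if (i:ℕ) ≤ m then D i ω else 0)
          = (fun i : ℕ => if h : i < n+2 then (if i ≤ m then D ⟨i,h⟩ ω else 0) else 0) (i:ℕ) := by
      intro i
      simp only
      rw [dif_pos i.isLt]
    rw [Finset.sum_congr rfl (fun i _ => e1 i)]
    rw [Fin.sum_univ_eq_sum_range (fun i : ℕ => if h : i < n+2 then (if i ≤ m then D ⟨i,h⟩ ω else 0) else 0) (n+2)]
    rw [← Finset.sum_subset (Finset.range_subset_range.2 (by omega : m+1 ≤ n+2))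
      (fun i hi hni => by
        simp only [Finset.mem_range] at hi hni
        rw [dif_pos (by omega), if_neg (by omega)])]
    rw [← hpsum ω (m+1) (by omega)]
    apply Finset.sum_congr rfl
    intro i hi
    simp only [Finset.mem_range] at hi
    rw [dif_pos (by omega), dif_pos (by omega), if_pos (by omega)]
  -- the events
  set A : Fin (n+1) → Set Ω :=
    fun k => {ω | (∀ j : Fin (n+1), j < k → B (t j) ω < x) ∧ x ≤ B (t k) ω} with hA
  set C : Fin (n+1) → Set Ω := fun k => {ω | 0 ≤ B T ω - B (t k) ω} with hC
  have hAmeas : ∀ k, MeasurableSet (A k) := by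
    intro k
    have : A k = (⋂ (j : Fin (n+1)) (_ : j < k), {ω | B (t j) ω < x})
        ∩ {ω | x ≤ B (t k) ω} := by
      ext ω
      simp [hA, Set.mem_iInter]
    rw [this]
    exact (MeasurableSet.iInter fun j => MeasurableSet.iInter fun _ =>
        measurableSet_lt (hB.meas _) measurable_const).inter
      (measurableSet_le measurable_const (hB.meas _))
  have hCmeas : ∀ k, MeasurableSet (C k) :=
    fun k => measurableSet_le measurable_const ((hB.meas _).sub (hB.meas _))
  have hcover : {ω | ∃ i, x ≤ B (t i) ω} = ⋃ k, A k := by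
    ext ω
    simp only [Set.mem_setOf_eq, Set.mem_iUnion]
    constructor
    · rintro ⟨i, hi⟩
      have hex : ∃ m : ℕ, ∃ h : m < n+1, x ≤ B (t ⟨m,h⟩) ω :=
        ⟨i.val, i.isLt, by rwa [Fin.eta]⟩
      obtain ⟨hm, hxm⟩ := Nat.find_spec hex
      refine ⟨⟨Nat.find hex, hm⟩, ?_, hxm⟩
      intro j hj
      by_contra hcon
      push_neg at hcon
      exact Nat.find_min hex (show j.val < Nat.find hex from hj)
        ⟨j.isLt, by rwa [Fin.eta]⟩
    · rintro ⟨k, _, hk2⟩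
      exact ⟨k, hk2⟩
  have hdisj : Pairwise (Function.onFun Disjoint A) := by
    intro k l hkl
    rcases lt_or_gt_of_ne hkl with h | h
    · refine Set.disjoint_left.2 ?_
      rintro ω ⟨_, hk2⟩ ⟨hl1, _⟩
      exact absurd hk2 (not_le.2 (hl1 k h))
    · refine Set.disjoint_left.2 ?_
      rintro ω ⟨hk1, _⟩ ⟨_, hl2⟩
      exact absurd hl2 (not_le.2 (hk1 l h))
  -- independence of A k and C k
  have hprod : ∀ k, P (A k ∩ C k) = P (A k) * P (C k) := by
    intro k
    set Sk : Finset (Fin (n+2)) := Finset.univ.filter (fun i => (i:ℕ) ≤ (k:ℕ)) with hSk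
    set Tk : Finset (Fin (n+2)) := Finset.univ.filter (fun i => (k:ℕ) < (i:ℕ)) with hTk
    have hdisjST : Disjoint Sk Tk := by
      rw [Finset.disjoint_left]
      intro i hi hi'
      simp only [hSk, hTk, Finset.mem_filter] at hi hi'
      omega
    have hIF := hindep.indepFun_finset Sk Tk hdisjST hDmeas
    set φ : (↥Sk → ℝ) → (Fin ((k:ℕ)+1) → ℝ) :=
      fun v j => ∑ i : ↥Sk, if ((i : Fin (n+2)):ℕ) ≤ (j:ℕ) then v i else 0 with hφ
    set ψ : (↥Tk → ℝ) → ℝ := fun v => ∑ i : ↥Tk, v i with hψ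
    have hφmeas : Measurable φ := by
      apply measurable_pi_lambda
      intro j
      apply Finset.measurable_sum
      intro i _
      split_ifs
      · exact measurable_pi_apply i
      · exact measurable_const
    have hψmeas : Measurable ψ := Finset.measurable_sum _ (fun i _ => measurable_pi_apply i)
    have hIndKey := (hIF.comp hφmeas hψmeas)
    -- identify the compositions
    have hφeq : ∀ (ω : Ω) (j : Fin ((k:ℕ)+1)),
        φ (fun i : ↥Sk => D i ω) j = B (t ⟨(j:ℕ), by omega⟩) ω := by
      intro ω j
      have hjk : (j:ℕ) ≤ (k:ℕ) := by omega
      simp only [hφ]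
      have hcoe : (∑ i : ↥Sk, if ((i : Fin (n+2)):ℕ) ≤ (j:ℕ) then D (i:Fin (n+2)) ω else 0)
          = ∑ i ∈ Sk, (if (i:ℕ) ≤ (j:ℕ) then D i ω else 0) :=
        Finset.sum_coe_sort Sk (fun i => if (i:ℕ) ≤ (j:ℕ) then D i ω else 0)
      rw [hcoe, ← Finset.sum_filter]
      have hfe : Sk.filter (fun i : Fin (n+2) => (i:ℕ) ≤ (j:ℕ))
          = Finset.univ.filter (fun i : Fin (n+2) => (i:ℕ) ≤ (j:ℕ)) := by
        ext i
        simp only [hSk, Finset.mem_filter, Finset.mem_univ, true_and]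
        omega
      rw [hfe, hSsum ω (j:ℕ) (by omega), hst (j:ℕ) (by omega) (by omega)]
    have hSsum' : ∀ ω : Ω, ∑ i ∈ Sk, D i ω = B (t k) ω := by
      intro ω
      have h1 := hSsum ω (k:ℕ) (by omega)
      rw [hst (k:ℕ) (by omega) (by omega)] at h1
      rw [hSk]
      exact h1
    have hψeq : ∀ ω : Ω, ψ (fun i : ↥Tk => D i ω) = B T ω - B (t k) ω := by
      intro ω
      simp only [hψ]
      have h1 : (∑ i : ↥Tk, D (i:Fin (n+2)) ω) = ∑ i ∈ Tk, D i ω :=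
        Finset.sum_coe_sort Tk (fun i => D i ω)
      rw [h1]
      have hsplit := Finset.sum_filter_add_sum_filter_not Finset.univ
        (fun i : Fin (n+2) => (i:ℕ) ≤ (k:ℕ)) (fun i => D i ω)
      have hnot : Finset.univ.filter (fun i : Fin (n+2) => ¬ ((i:ℕ) ≤ (k:ℕ))) = Tk := by
        ext i
        simp only [hTk, Finset.mem_filter, Finset.mem_univ, true_and]
        omega
      have hfS : Finset.univ.filter (fun i : Fin (n+2) => (i:ℕ) ≤ (k:ℕ)) = Sk := hSk.symm
      rw [hnot, hfS] at hsplit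
      have huniv : (∑ i : Fin (n+2), D i ω) = B T ω := by
        have h2 := hSsum ω (n+1) (by omega)
        rw [hsT (by omega)] at h2
        rw [← h2]
        apply Finset.sum_congr _ (fun _ _ => rfl)
        ext i
        simpa using Nat.lt_succ_iff.mp i.isLt
      rw [huniv, hSsum' ω] at hsplit
      linarith
    set Mset : Set (Fin ((k:ℕ)+1) → ℝ) :=
      {w | (∀ j : Fin ((k:ℕ)+1), (j:ℕ) < (k:ℕ) → w j < x) ∧ x ≤ w ⟨(k:ℕ), by omega⟩} with hM
    have hMmeas : MeasurableSet Mset := by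
      have : Mset = (⋂ (j : Fin ((k:ℕ)+1)) (_ : (j:ℕ) < (k:ℕ)),
          {w : Fin ((k:ℕ)+1) → ℝ | w j < x}) ∩ {w | x ≤ w ⟨(k:ℕ), by omega⟩} := by
        ext w
        simp [hM, Set.mem_iInter]
      rw [this]
      exact (MeasurableSet.iInter fun j => MeasurableSet.iInter fun _ =>
          measurableSet_lt (measurable_pi_apply j) measurable_const).inter
        (measurableSet_le measurable_const (measurable_pi_apply _))
    have hApre : A k = (fun ω => φ (fun i : ↥Sk => D i ω)) ⁻¹' Mset := by
      ext ω
      simp only [hA, hM, Set.mem_setOf_eq, Set.mem_preimage]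
      constructor
      · rintro ⟨h1, h2⟩
        refine ⟨?_, ?_⟩
        · intro j hj
          rw [hφeq ω j]
          exact h1 ⟨(j:ℕ), by omega⟩ (by simpa [Fin.lt_def] using hj)
        · rw [hφeq ω ⟨(k:ℕ), by omega⟩]
          exact h2
      · rintro ⟨h1, h2⟩
        refine ⟨?_, ?_⟩
        · intro j hj
          have hj' : (j:ℕ) < (k:ℕ) := hj
          have h3 := h1 ⟨(j:ℕ), by omega⟩ hj'
          rw [hφeq ω ⟨(j:ℕ), by omega⟩] at h3
          exact h3
        · rw [hφeq ω ⟨(k:ℕ), by omega⟩] at h2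
          exact h2
    have hCpre : C k = (fun ω => ψ (fun i : ↥Tk => D i ω)) ⁻¹' (Set.Ici 0) := by
      ext ω
      simp only [hC, Set.mem_setOf_eq, Set.mem_preimage, Set.mem_Ici, hψeq ω]
    rw [hApre, hCpre]
    exact hIndKey.measure_inter_preimage_eq_mul Mset (Set.Ici 0) hMmeas measurableSet_Ici
  -- half probability for C k
  have hChalf : ∀ k, (2:ℝ≥0∞)⁻¹ ≤ P (C k) := by
    intro k
    have hmap := hB.gauss (t k) T (ht0 k) (hT k)
    have : C k = (fun ω => B T ω - B (t k) ω) ⁻¹' (Set.Ici 0) := rfl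
    rw [this, ← Measure.map_apply (f := fun ω => B T ω - B (t k) ω) ((hB.meas T).sub (hB.meas _)) measurableSet_Ici, hmap]
    exact gaussian_half _
  -- put things together
  have hsub : ∀ k, A k ∩ C k ⊆ {ω | x ≤ B T ω} := by
    rintro k ω ⟨⟨_, h2⟩, h3⟩
    have h3' : 0 ≤ B T ω - B (t k) ω := h3
    simp only [Set.mem_setOf_eq]
    linarith
  have hABle : ∀ k, P (A k) ≤ 2 * P (A k ∩ C k) := by
    intro k
    calc P (A k) = 2 * (2⁻¹ * P (A k)) := by
          rw [← mul_assoc, ENNReal.mul_inv_cancel two_ne_zero ENNReal.ofNat_ne_top, one_mul]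
      _ ≤ 2 * (P (C k) * P (A k)) :=
          mul_le_mul_right (mul_le_mul_left (hChalf k) _) 2
      _ = 2 * P (A k ∩ C k) := by rw [hprod k]; ring
  calc P {ω | ∃ i, x ≤ B (t i) ω} = P (⋃ k, A k) := by rw [hcover]
    _ ≤ ∑' k, P (A k) := measure_iUnion_le A
    _ ≤ ∑' k, 2 * P (A k ∩ C k) := ENNReal.tsum_le_tsum hABle
    _ = 2 * ∑' k, P (A k ∩ C k) := ENNReal.tsum_mul_left
    _ = 2 * P (⋃ k, A k ∩ C k) := by
        rw [measure_iUnion ?_ (fun k => (hAmeas k).inter (hCmeas k))]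
        exact fun k l hkl => ((hdisj hkl).mono Set.inter_subset_left Set.inter_subset_left)
    _ ≤ 2 * P {ω | x ≤ B T ω} := by
        apply mul_le_mul_right
        exact measure_mono (Set.iUnion_subset hsub)

lemma levy_sup (hB : IsBrownianMotion P B) {T x : ℝ} (hT : 0 < T) :
    P {ω | ∃ u ∈ Set.Icc 0 T, x ≤ B u ω} ≤
      2 * gaussianReal 0 T.toNNReal (Set.Ici x) := by
  classical
  haveI := hB.isProb
  -- the law of B T
  have hlaw : Measure.map (B T) P = gaussianReal 0 T.toNNReal := by
    have h := hB.gauss 0 T le_rfl hT.le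
    have he : (fun ω => B T ω - B 0 ω) = B T := by
      funext ω
      rw [hB.init ω, sub_zero]
    rw [he, sub_zero] at h
    exact h
  -- countable dense family in [0, T]
  set d : ℕ → ℝ := fun m =>
    if m = 0 then T else max 0 (min (((Denumerable.eqv ℚ).symm (m-1) : ℚ) : ℝ) T) with hd
  have hd0 : ∀ m, 0 ≤ d m := by
    intro m
    simp only [hd]
    split_ifs
    · exact hT.le
    · exact le_max_left _ _
  have hdT : ∀ m, d m ≤ T := by
    intro m
    simp only [hd]
    split_ifs
    · exact le_rfl
    · exact max_le hT.le (min_le_right _ _)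
  have hdense : ∀ (ω : Ω), (∃ u ∈ Set.Icc 0 T, x ≤ B u ω) → ∀ ε : ℝ, 0 < ε →
      ∃ m, x - ε ≤ B (d m) ω := by
    rintro ω ⟨u, ⟨hu0, huT⟩, hxu⟩ ε hε
    have hc : ContinuousAt (fun v => B v ω) u := (hB.cont ω).continuousAt
    rw [Metric.continuousAt_iff] at hc
    obtain ⟨δ, hδ, hball⟩ := hc ε hε
    obtain ⟨r, hr1, hr2⟩ := exists_rat_btwn (show u - δ < u by linarith)
    have hrδ : |max 0 (min (r:ℝ) T) - u| < δ := by
      rw [abs_lt]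
      constructor
      · have : u - δ < max 0 (min (r:ℝ) T) := by
          rcases le_total ((r:ℝ)) T with h | h
          · calc u - δ < (r:ℝ) := hr1
              _ = min (r:ℝ) T := (min_eq_left h).symm
              _ ≤ max 0 (min (r:ℝ) T) := le_max_right _ _
          · calc u - δ < u := by linarith
              _ ≤ T := huT
              _ = min (r:ℝ) T := (min_eq_right h).symm
              _ ≤ max 0 (min (r:ℝ) T) := le_max_right _ _
        linarith
      · have : max 0 (min (r:ℝ) T) < u + δ := by
          apply max_lt
          · linarith
          · calc min (r:ℝ) T ≤ (r:ℝ) := min_le_left _ _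
              _ < u + δ := by linarith
        linarith
    set m := (Denumerable.eqv ℚ) r + 1 with hm
    have hdm : d m = max 0 (min ((r:ℝ)) T) := by
      simp only [hd, hm]
      rw [if_neg (Nat.succ_ne_zero _)]
      rw [Nat.add_sub_cancel, Equiv.symm_apply_apply]
    refine ⟨m, ?_⟩
    have := hball (show dist (d m) u < δ by rwa [Real.dist_eq, hdm])
    rw [Real.dist_eq, abs_lt] at this
    linarith
  -- finite-time maximal bound for the countable family
  have hfin : ∀ (ε : ℝ), 0 < ε → ∀ N : ℕ,
      P {ω | ∃ m ≤ N, x - ε ≤ B (d m) ω} ≤ 2 * P {ω | x - ε ≤ B T ω} := by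
    intro ε hε N
    set sfin : Finset ℝ := Finset.image d (Finset.range (N+1)) with hsfin
    have hcard : 0 < sfin.card := by
      rw [Finset.card_pos]
      exact ⟨d 0, Finset.mem_image_of_mem d (Finset.mem_range.2 (Nat.succ_pos N))⟩
    obtain ⟨K, hK⟩ : ∃ K, sfin.card = K + 1 := ⟨sfin.card - 1, by omega⟩
    set tvec : Fin (K+1) → ℝ := fun i => (sfin.orderIsoOfFin hK i : ℝ) with htvec
    have htmem : ∀ i, tvec i ∈ sfin := fun i => (sfin.orderIsoOfFin hK i).2
    have ht0 : ∀ i, 0 ≤ tvec i := by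
      intro i
      obtain ⟨m, _, hm2⟩ := Finset.mem_image.1 (htmem i)
      rw [← hm2]
      exact hd0 m
    have htT : ∀ i, tvec i ≤ T := by
      intro i
      obtain ⟨m, _, hm2⟩ := Finset.mem_image.1 (htmem i)
      rw [← hm2]
      exact hdT m
    have htmono : Monotone tvec :=
      fun i j hij => Subtype.coe_le_coe.2 ((sfin.orderIsoOfFin hK).monotone hij)
    have hev : {ω | ∃ m ≤ N, x - ε ≤ B (d m) ω}
        = {ω | ∃ i, x - ε ≤ B (tvec i) ω} := by
      ext ω
      simp only [Set.mem_setOf_eq]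
      constructor
      · rintro ⟨m, hm, hx⟩
        have : d m ∈ sfin := Finset.mem_image_of_mem d (Finset.mem_range.2 (by omega))
        obtain ⟨i, hi⟩ := (sfin.orderIsoOfFin hK).surjective ⟨d m, this⟩
        refine ⟨i, ?_⟩
        have : tvec i = d m := by rw [htvec]; exact congrArg Subtype.val hi
        rwa [this]
      · rintro ⟨i, hx⟩
        obtain ⟨m, hm1, hm2⟩ := Finset.mem_image.1 (htmem i)
        exact ⟨m, Nat.lt_succ_iff.mp (Finset.mem_range.1 hm1), by rwa [hm2]⟩
    rw [hev]
    exact levy_max hB K tvec ht0 htmono htT (x - ε)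
  -- pass to countable union
  have hcount : ∀ (ε : ℝ), 0 < ε →
      P {ω | ∃ u ∈ Set.Icc 0 T, x ≤ B u ω} ≤ 2 * P {ω | x - ε ≤ B T ω} := by
    intro ε hε
    have hsubset : {ω | ∃ u ∈ Set.Icc 0 T, x ≤ B u ω}
        ⊆ ⋃ N : ℕ, {ω | ∃ m ≤ N, x - ε ≤ B (d m) ω} := by
      intro ω hω
      obtain ⟨m, hm⟩ := hdense ω hω ε hε
      exact Set.mem_iUnion.2 ⟨m, ⟨m, le_rfl, hm⟩⟩
    refine le_trans (measure_mono hsubset) ?_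
    have hmonoN : Monotone (fun N => {ω | ∃ m ≤ N, x - ε ≤ B (d m) ω}) := by
      intro N N' hNN' ω ⟨m, hm, hx⟩
      exact ⟨m, le_trans hm hNN', hx⟩
    rw [(Monotone.directed_le hmonoN).measure_iUnion]
    exact iSup_le fun N => hfin ε hε N
  -- take ε → 0
  have hlawapp : ∀ y : ℝ, P {ω | y ≤ B T ω} = gaussianReal 0 T.toNNReal (Set.Ici y) := by
    intro y
    rw [← hlaw, Measure.map_apply (hB.meas T) measurableSet_Ici]
    rfl
  have hstep : ∀ j : ℕ, P {ω | ∃ u ∈ Set.Icc 0 T, x ≤ B u ω}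
      ≤ 2 * gaussianReal 0 T.toNNReal (Set.Ici (x - 1/(j+1))) := by
    intro j
    rw [← hlawapp]
    exact hcount (1/(j+1)) (by positivity)
  have hiInter : (⋂ j : ℕ, Set.Ici (x - 1/(j+1))) = Set.Ici x := by
    ext y
    simp only [Set.mem_iInter, Set.mem_Ici]
    constructor
    · intro h
      by_contra hcon
      push_neg at hcon
      obtain ⟨j, hj⟩ := exists_nat_one_div_lt (show (0:ℝ) < x - y by linarith)
      have := h j
      have hj' : 1 / ((j:ℝ)+1) < x - y := hj
      linarith
    · intro h j
      have : (0:ℝ) < 1/((j:ℝ)+1) := by positivity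
      linarith
  have hlim : (⨅ j : ℕ, gaussianReal 0 T.toNNReal (Set.Ici (x - 1/(j+1))))
      = gaussianReal 0 T.toNNReal (Set.Ici x) := by
    rw [← hiInter]
    have hanti : Antitone (fun j : ℕ => Set.Ici (x - 1/((j:ℝ)+1))) := by
      intro j j' hjj'
      apply Set.Ici_subset_Ici.2
      have h1 : ((j:ℝ)+1) ≤ ((j':ℝ)+1) := by exact_mod_cast by omega
      have h2 : 1/((j':ℝ)+1) ≤ 1/((j:ℝ)+1) := by
        apply one_div_le_one_div_of_le (by positivity) h1
      linarith
    refine (Directed.measure_iInter (fun j => measurableSet_Ici.nullMeasurableSet) (hanti.directed_ge) ?_).symm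
    exact ⟨0, measure_ne_top _ _⟩
  calc P {ω | ∃ u ∈ Set.Icc 0 T, x ≤ B u ω}
      ≤ ⨅ j : ℕ, 2 * gaussianReal 0 T.toNNReal (Set.Ici (x - 1/(j+1))) :=
        le_iInf hstep
    _ = 2 * ⨅ j : ℕ, gaussianReal 0 T.toNNReal (Set.Ici (x - 1/(j+1))) := by
        rw [ENNReal.mul_iInf]
        intro h
        exact absurd h ENNReal.ofNat_ne_top
    _ = 2 * gaussianReal 0 T.toNNReal (Set.Ici x) := by rw [hlim]

end Levy

lemma gaussianReal_map_neg (v : ℝ≥0) :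
    (gaussianReal 0 v).map (fun x : ℝ => -x) = gaussianReal 0 v := by
  have hmap := gaussianReal_map_const_mul (μ := 0) (v := v) (-1)
  norm_num at hmap
  exact hmap

lemma neg_bm {Ω : Type*} [MeasurableSpace Ω] {P : Measure Ω} {B : ℝ → Ω → ℝ}
    (hB : IsBrownianMotion P B) : IsBrownianMotion P (fun u ω => -B u ω) := by
  constructor
  · exact hB.isProb
  · intro ω; rw [hB.init ω, neg_zero]
  · intro ω; exact (hB.cont ω).neg
  · intro u; exact (hB.meas u).neg
  · intro u v hu huv
    have h := hB.gauss u v hu huv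
    have he : (fun ω => (-B v ω) - (-B u ω))
        = (fun x : ℝ => -x) ∘ (fun ω => B v ω - B u ω) := by
      funext ω; simp; ring
    rw [he, ← Measure.map_map (g := fun x : ℝ => -x) (f := fun ω => B v ω - B u ω) measurable_neg ((hB.meas v).sub (hB.meas u)), h,
      _root_.gaussianReal_map_neg]
  · intro n ts hts0 htsmono
    have h := (hB.indep n ts hts0 htsmono).comp (fun _ => fun x : ℝ => -x)
      (fun _ => measurable_neg)
    have he : (fun (i : Fin n) (ω : Ω) => (-B (ts i.succ) ω) - (-B (ts i.castSucc) ω))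
        = fun i => (fun x : ℝ => -x) ∘ (fun ω => B (ts i.succ) ω - B (ts i.castSucc) ω) := by
      funext i ω; simp; ring
    rw [he]
    exact h

/-- Lemma 3.1 (LILbound): for a standard Brownian motion `B`, for all `c > 1`,
`M > 1`, `a > 0`,
`P( sup_{1 ≤ t ≤ M} |B_t|/√t ≥ a ) ≤ 4·((log M)/(log c) + 1)·(c/a)·exp(−(1/2)(a/c)²)`. -/
theorem favorite_points_LILbound
    {Ω : Type*} [MeasurableSpace Ω] (P : Measure Ω) (B : ℝ → Ω → ℝ)
    (hB : IsBrownianMotion P B) (c M a : ℝ) (hc : 1 < c) (hM : 1 < M) (ha : 0 < a) :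
    P {ω | a ≤ sSup ((fun t => |B t ω| / Real.sqrt t) '' Icc (1 : ℝ) M)} ≤
      ENNReal.ofReal (4 * (Real.log M / Real.log c + 1) * (c / a) *
        Real.exp (-(1 / 2) * (a / c) ^ 2)) := by
  classical
  haveI := hB.isProb
  have hc0 : (0:ℝ) < c := lt_trans one_pos hc
  have hlogc : 0 < Real.log c := Real.log_pos hc
  have hlogM : 0 < Real.log M := Real.log_pos hM
  set n : ℕ := ⌊Real.log M / Real.log c⌋₊ + 1 with hn
  have hratio_nonneg : 0 ≤ Real.log M / Real.log c := by positivity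
  have hnle : (n:ℝ) ≤ Real.log M / Real.log c + 1 := by
    rw [hn]
    push_cast
    have := Nat.floor_le hratio_nonneg
    linarith
  have hMlt : Real.log M / Real.log c < (n:ℝ) := by
    rw [hn]
    push_cast
    exact Nat.lt_floor_add_one _
  have hMcn : M ≤ c^n := by
    have h1 : Real.log M < n * Real.log c := by
      rw [div_lt_iff₀ hlogc] at hMlt
      linarith
    have h2 : Real.log M < Real.log (c^n) := by
      rw [Real.log_pow]
      exact_mod_cast h1
    have := (Real.log_lt_log_iff (by positivity) (by positivity)).1 h2
    linarith
  set xk : ℕ → ℝ := fun k => a * Real.sqrt (c^k) with hxk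
  set Tk : ℕ → ℝ := fun k => c^(k+1) with hTk
  have hTkpos : ∀ k, 0 < Tk k := fun k => by positivity
  have hsqp : ∀ k : ℕ, 0 < Real.sqrt (c^k) := fun k => Real.sqrt_pos.2 (by positivity)
  have hxkpos : ∀ k, 0 < xk k := fun k => mul_pos ha (hsqp k)
  -- event inclusion
  have hincl : {ω | a ≤ sSup ((fun t => |B t ω| / Real.sqrt t) '' Icc (1:ℝ) M)}
      ⊆ ⋃ k ∈ Finset.range n, ({ω | ∃ u ∈ Set.Icc (0:ℝ) (Tk k), xk k ≤ B u ω}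
          ∪ {ω | ∃ u ∈ Set.Icc (0:ℝ) (Tk k), xk k ≤ -B u ω}) := by
    intro ω hω
    have hcont : ContinuousOn (fun t => |B t ω| / Real.sqrt t) (Set.Icc 1 M) := by
      apply ContinuousOn.div
      · exact ((hB.cont ω).abs).continuousOn
      · exact Real.continuous_sqrt.continuousOn
      · intro t ht
        exact ne_of_gt (Real.sqrt_pos.2 (by linarith [ht.1]))
    have hne : (Set.Icc (1:ℝ) M).Nonempty := ⟨1, le_rfl, hM.le⟩
    obtain ⟨u, huI, humax⟩ := (isCompact_Icc).exists_isMaxOn hne hcont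
    have hsup : sSup ((fun t => |B t ω| / Real.sqrt t) '' Set.Icc (1:ℝ) M)
        = |B u ω| / Real.sqrt u := by
      apply IsGreatest.csSup_eq
      constructor
      · exact Set.mem_image_of_mem _ huI
      · rintro y ⟨v, hv, rfl⟩
        exact humax hv
    rw [Set.mem_setOf_eq, hsup] at hω
    have hu1 : (1:ℝ) ≤ u := huI.1
    have huM : u ≤ M := huI.2
    have hupos : 0 < u := by linarith
    have hlogu : 0 ≤ Real.log u / Real.log c :=
      div_nonneg (Real.log_nonneg hu1) hlogc.le
    set k : ℕ := ⌊Real.log u / Real.log c⌋₊ with hk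
    have hkn : k < n := by
      have h1 : Real.log u ≤ Real.log M := Real.log_le_log hupos huM
      have h2 : (k:ℝ) ≤ Real.log u / Real.log c := Nat.floor_le hlogu
      have h3 : Real.log u / Real.log c ≤ Real.log M / Real.log c := by gcongr
      have : (k:ℝ) < n := lt_of_le_of_lt (le_trans h2 h3) hMlt
      exact_mod_cast this
    have hck_le : c^k ≤ u := by
      have h2 : (k:ℝ) * Real.log c ≤ Real.log u :=
        (le_div_iff₀ hlogc).1 (Nat.floor_le hlogu)
      have h3 : Real.log (c^k) ≤ Real.log u := by
        rw [Real.log_pow]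
        exact_mod_cast h2
      rcases eq_or_lt_of_le h3 with h | h
      · have := Real.log_injOn_pos (by simp; positivity) (by simp; exact hupos) h
        linarith [this.le]
      · exact ((Real.log_lt_log_iff (by positivity) hupos).1 h).le
    have hu_le : u ≤ Tk k := by
      have h2 : Real.log u / Real.log c < (k:ℝ)+1 := Nat.lt_floor_add_one _
      have h3 : Real.log u < ((k:ℝ)+1) * Real.log c := by
        rw [div_lt_iff₀ hlogc] at h2
        linarith
      have h4 : Real.log u < Real.log (c^(k+1)) := by
        rw [Real.log_pow]
        push_cast
        linarith
      exact ((Real.log_lt_log_iff hupos (by positivity)).1 h4).le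
    have habs : xk k ≤ |B u ω| := by
      have h5 : Real.sqrt (c^k) ≤ Real.sqrt u := Real.sqrt_le_sqrt hck_le
      have h6 : a * Real.sqrt u ≤ |B u ω| :=
        (le_div_iff₀ (Real.sqrt_pos.2 hupos)).1 hω
      calc xk k = a * Real.sqrt (c^k) := rfl
        _ ≤ a * Real.sqrt u := by gcongr
        _ ≤ |B u ω| := h6
    refine Set.mem_biUnion (Finset.mem_range.2 hkn) ?_
    rcases abs_cases (B u ω) with ⟨he, _⟩ | ⟨he, _⟩
    · left
      exact ⟨u, ⟨by linarith, hu_le⟩, by rw [he] at habs; exact habs⟩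
    · right
      exact ⟨u, ⟨by linarith, hu_le⟩, by rw [he] at habs; exact habs⟩
  refine le_trans (measure_mono hincl) ?_
  refine le_trans (measure_biUnion_finset_le _ _) ?_
  -- per-term bound
  set r : ℝ := 4 * (Real.sqrt c / a) * Real.exp (-a^2/(2*c)) with hr
  have hterm : ∀ k ∈ Finset.range n,
      P ({ω | ∃ u ∈ Set.Icc (0:ℝ) (Tk k), xk k ≤ B u ω}
          ∪ {ω | ∃ u ∈ Set.Icc (0:ℝ) (Tk k), xk k ≤ -B u ω})
        ≤ ENNReal.ofReal r := by
    intro k _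
    have hcoe : ((Tk k).toNNReal : ℝ) = Tk k := Real.coe_toNNReal _ (hTkpos k).le
    have hvne : (Tk k).toNNReal ≠ 0 := by
      rw [ne_eq, Real.toNNReal_eq_zero, not_le]
      exact hTkpos k
    have htail : gaussianReal 0 (Tk k).toNNReal (Set.Ici (xk k))
        ≤ ENNReal.ofReal (Real.sqrt (Tk k) / (xk k) * Real.exp (-(xk k)^2 / (2*(Tk k)))) := by
      have := gaussian_tail hvne (hxkpos k)
      rwa [hcoe] at this
    have hval : Real.sqrt (Tk k) / (xk k) * Real.exp (-(xk k)^2 / (2*(Tk k)))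
        = (Real.sqrt c / a) * Real.exp (-a^2/(2*c)) := by
      have h1 : Real.sqrt (Tk k) = Real.sqrt (c^k) * Real.sqrt c := by
        rw [hTk]
        simp only [pow_succ]
        rw [Real.sqrt_mul (by positivity)]
      have h2 : (xk k)^2 = a^2 * c^k := by
        rw [hxk]
        simp only
        rw [mul_pow, Real.sq_sqrt (by positivity)]
      rw [h1, h2, hxk, hTk]
      simp only
      have hck : (0:ℝ) < c^k := by positivity
      have hsq : Real.sqrt (c^k) ≠ 0 := ne_of_gt (hsqp k)
      congr 1
      · field_simp
      · congr 1
        rw [pow_succ]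
        field_simp
        ring
    have h2g : P {ω | ∃ u ∈ Set.Icc (0:ℝ) (Tk k), xk k ≤ B u ω}
        ≤ 2 * gaussianReal 0 (Tk k).toNNReal (Set.Ici (xk k)) :=
      levy_sup hB (hTkpos k)
    have h2g' : P {ω | ∃ u ∈ Set.Icc (0:ℝ) (Tk k), xk k ≤ -B u ω}
        ≤ 2 * gaussianReal 0 (Tk k).toNNReal (Set.Ici (xk k)) :=
      levy_sup (neg_bm hB) (hTkpos k)
    calc P ({ω | ∃ u ∈ Set.Icc (0:ℝ) (Tk k), xk k ≤ B u ω}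
          ∪ {ω | ∃ u ∈ Set.Icc (0:ℝ) (Tk k), xk k ≤ -B u ω})
        ≤ P {ω | ∃ u ∈ Set.Icc (0:ℝ) (Tk k), xk k ≤ B u ω}
          + P {ω | ∃ u ∈ Set.Icc (0:ℝ) (Tk k), xk k ≤ -B u ω} := measure_union_le _ _
      _ ≤ 2 * gaussianReal 0 (Tk k).toNNReal (Set.Ici (xk k))
          + 2 * gaussianReal 0 (Tk k).toNNReal (Set.Ici (xk k)) := add_le_add h2g h2g'
      _ ≤ 2 * ENNReal.ofReal ((Real.sqrt c / a) * Real.exp (-a^2/(2*c)))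
          + 2 * ENNReal.ofReal ((Real.sqrt c / a) * Real.exp (-a^2/(2*c))) := by
          rw [← hval]
          exact add_le_add (mul_le_mul_right htail 2) (mul_le_mul_right htail 2)
      _ = ENNReal.ofReal r := by
          rw [hr]
          rw [← ENNReal.ofReal_ofNat 2, ← ENNReal.ofReal_mul (by norm_num),
            ← ENNReal.ofReal_add (by positivity) (by positivity)]
          congr 1
          ring
  refine le_trans (Finset.sum_le_sum hterm) ?_
  rw [Finset.sum_const, Finset.card_range, nsmul_eq_mul,
    ← ENNReal.ofReal_natCast n, ← ENNReal.ofReal_mul (by positivity)]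
  apply ENNReal.ofReal_le_ofReal
  have hE : Real.exp (-a^2/(2*c)) ≤ Real.exp (-(1/2) * (a/c)^2) := by
    apply Real.exp_le_exp.2
    rw [div_pow]
    have hc2 : c ≤ c^2 := by nlinarith
    have h1 : a^2 / c^2 ≤ a^2 / c := by
      apply div_le_div_of_nonneg_left (by positivity) hc0 ?_
      · nlinarith
    calc -a^2/(2*c) = -(a^2/(2*c)) := by ring
      _ ≤ -((1/2) * (a^2/c^2)) := by
          have : (1/2) * (a^2/c^2) ≤ a^2/(2*c) := by
            calc (1/2) * (a^2/c^2) ≤ (1/2) * (a^2/c) := by gcongr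
              _ = a^2/(2*c) := by ring
          linarith
      _ = -(1/2) * (a^2/c^2) := by ring
  have hsc : Real.sqrt c ≤ c :=
    calc Real.sqrt c ≤ Real.sqrt (c^2) := Real.sqrt_le_sqrt (by nlinarith)
      _ = c := Real.sqrt_sq hc0.le
  calc (n:ℝ) * r = (n:ℝ) * (4 * (Real.sqrt c / a) * Real.exp (-a^2/(2*c))) := by rw [hr]
    _ ≤ (Real.log M / Real.log c + 1) * (4 * (c / a) * Real.exp (-(1/2) * (a/c)^2)) := by
        apply mul_le_mul hnle ?_ (by positivity) (by positivity)
        apply mul_le_mul ?_ hE (by positivity) (by positivity)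
        gcongr
    _ = 4 * (Real.log M / Real.log c + 1) * (c / a) * Real.exp (-(1/2) * (a/c)^2) := by
        ring

end AuxLIL

end
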